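/- Let M be a bounded linear operator on a complex Hilbert space H, let u, v be unit vectors in H, and suppose a, b ∈ ℂ satisfy M*u = ā·u and M*v = b̄·v (where M* is the Hilbert-space adjoint and ā denotes complex conjugation). Then |a − b| ≤ 2‖M‖·δ(u,v), where δ(u,v) = √(1 − |⟨u,v⟩|²). -/

import Mathlib

set_option maxHeartbeats 1000000

open Complex ContinuousLinearMap

lemma quad_cs (A B : ℝ) (w : ℂ) (hA : 0 ≤ A) (hB : 0 ≤ B)
    (h : ∀ t : ℂ, 0 ≤ A + B * ‖t‖ ^ 2 + 2 * (t * w).re) :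
    ‖w‖ ^ 2 ≤ A * B := by
  rcases eq_or_ne w 0 with hw | hw
  · simp [hw]; positivity
  · have hc : (starRingEnd ℂ) w * w = ((‖w‖ ^ 2 : ℝ) : ℂ) := by
      rw [mul_comm, Complex.mul_conj]
      norm_cast
      rw [Complex.normSq_eq_norm_sq]
    have h' : ∀ r : ℝ, 0 ≤ (B * ‖w‖ ^ 2) * (r * r) + (-(2 * ‖w‖ ^ 2)) * r + A := by
      intro r
      have h0 := h ((r : ℂ) * (-(starRingEnd ℂ w)))
      have hre : (((r : ℂ) * (-(starRingEnd ℂ w))) * w).re = -(r * ‖w‖ ^ 2) := by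
        have he : ((r : ℂ) * (-(starRingEnd ℂ w))) * w = -((r : ℂ) * ((‖w‖ ^ 2 : ℝ) : ℂ)) := by
          linear_combination (-(r : ℂ)) * hc
        rw [he, Complex.neg_re, Complex.re_ofReal_mul, Complex.ofReal_re]
      have hn : ‖((r : ℂ) * (-(starRingEnd ℂ w)))‖ ^ 2 = r * r * ‖w‖ ^ 2 := by
        rw [norm_mul, norm_neg, RCLike.norm_conj, mul_pow, Complex.norm_real]
        rw [Real.norm_eq_abs, _root_.sq_abs]
        ring
      rw [hn, hre] at h0
      linarith
    have hd := discrim_le_zero h'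
    rw [discrim] at hd
    have hw2 : 0 < ‖w‖ ^ 2 := pow_pos (norm_pos_iff.mpr hw) 2
    nlinarith [hd, hw2]

/-- multiplier Lipschitz estimate. Let `M` be a bounded
operator on a complex Hilbert space, `u, v` unit vectors, and `a, b ∈ ℂ` with
`M*u = ā·u` and `M*v = b̄·v`. Then `|a − b| ≤ 2‖M‖·δ(u,v)` where
`δ(u,v) = √(1 − |⟨u,v⟩|²)`. -/
theorem multiplier_lipschitz {H : Type*} [NormedAddCommGroup H] [InnerProductSpace ℂ H]
    [CompleteSpace H] (M : H →L[ℂ] H) (u v : H) (hu : ‖u‖ = 1) (hv : ‖v‖ = 1)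
    (a b : ℂ)
    (hMu : ContinuousLinearMap.adjoint M u = (starRingEnd ℂ a) • u)
    (hMv : ContinuousLinearMap.adjoint M v = (starRingEnd ℂ b) • v) :
    ‖a - b‖ ≤ 2 * ‖M‖ * Real.sqrt (1 - ‖(inner ℂ u v : ℂ)‖ ^ 2) := by
  set N : ℝ := ‖M‖ with hN
  set s : ℂ := (inner ℂ u v : ℂ) with hs
  have hNadj : ‖ContinuousLinearMap.adjoint M‖ = N := by
    exact (ContinuousLinearMap.adjoint (𝕜 := ℂ) (E := H) (F := H)).norm_map M
  have hN0 : 0 ≤ N := norm_nonneg M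
  -- |a| ≤ N and |b| ≤ N
  have ha : ‖a‖ ≤ N := by
    have h1 : ‖ContinuousLinearMap.adjoint M u‖ ≤ N := by
      calc ‖ContinuousLinearMap.adjoint M u‖ ≤ ‖ContinuousLinearMap.adjoint M‖ * ‖u‖ :=
            (ContinuousLinearMap.adjoint M).le_opNorm u
        _ = N := by rw [hNadj, hu, mul_one]
    rwa [hMu, norm_smul, RCLike.norm_conj, hu, mul_one] at h1
  have hb : ‖b‖ ≤ N := by
    have h1 : ‖ContinuousLinearMap.adjoint M v‖ ≤ N := by
      calc ‖ContinuousLinearMap.adjoint M v‖ ≤ ‖ContinuousLinearMap.adjoint M‖ * ‖v‖ :=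
            (ContinuousLinearMap.adjoint M).le_opNorm v
        _ = N := by rw [hNadj, hv, mul_one]
    rwa [hMv, norm_smul, RCLike.norm_conj, hv, mul_one] at h1
  have hs1 : ‖s‖ ≤ 1 := by
    have := norm_inner_le_norm (𝕜 := ℂ) u v
    rwa [hu, hv, mul_one] at this
  set w : ℂ := s * (((N : ℂ)) ^ 2 - a * (starRingEnd ℂ b)) with hw
  have key : ‖w‖ ^ 2 ≤ (N ^ 2 - ‖a‖ ^ 2) * (N ^ 2 - ‖b‖ ^ 2) := by
    apply quad_cs
    · nlinarith [norm_nonneg a]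
    · nlinarith [norm_nonneg b]
    · intro t
      have hx : ContinuousLinearMap.adjoint M (u + t • v)
          = (starRingEnd ℂ a) • u + (t * starRingEnd ℂ b) • v := by
        rw [map_add, map_smul, hMu, hMv, smul_smul]
      have hle : ‖ContinuousLinearMap.adjoint M (u + t • v)‖ ≤ N * ‖u + t • v‖ := by
        calc ‖ContinuousLinearMap.adjoint M (u + t • v)‖
            ≤ ‖ContinuousLinearMap.adjoint M‖ * ‖u + t • v‖ :=
              (ContinuousLinearMap.adjoint M).le_opNorm _
          _ = N * ‖u + t • v‖ := by rw [hNadj]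
      rw [hx] at hle
      have hsq : ‖(starRingEnd ℂ a) • u + (t * starRingEnd ℂ b) • v‖ ^ 2
          ≤ N ^ 2 * ‖u + t • v‖ ^ 2 := by
        nlinarith [norm_nonneg ((starRingEnd ℂ a) • u + (t * starRingEnd ℂ b) • v),
          norm_nonneg (u + t • v), hle]
      -- expand both squares
      have e1 : ‖u + t • v‖ ^ 2 = 1 + 2 * (t * s).re + ‖t‖ ^ 2 := by
        rw [@norm_add_sq ℂ, hu, inner_smul_right, norm_smul, hv]
        simp [RCLike.re_to_complex, hs]
      have e2 : ‖(starRingEnd ℂ a) • u + (t * starRingEnd ℂ b) • v‖ ^ 2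
          = ‖a‖ ^ 2 + 2 * (a * t * (starRingEnd ℂ b) * s).re + ‖t‖ ^ 2 * ‖b‖ ^ 2 := by
        rw [@norm_add_sq ℂ, inner_smul_left, inner_smul_right, norm_smul, norm_smul,
          RCLike.norm_conj, hu, hv, norm_mul, RCLike.norm_conj, Complex.conj_conj, ← hs]
        simp only [RCLike.re_to_complex, mul_one]
        rw [show a * (t * (starRingEnd ℂ) b * s) = a * t * (starRingEnd ℂ) b * s from by ring]
        ring
      rw [e1, e2] at hsq
      have e3 : (t * w).re = N ^ 2 * (t * s).re - (a * t * (starRingEnd ℂ b) * s).re := by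
        have : t * w = ((N ^ 2 : ℝ) : ℂ) * (t * s) - a * t * (starRingEnd ℂ b) * s := by
          rw [hw]; push_cast; ring
        rw [this, Complex.sub_re, Complex.re_ofReal_mul]
      rw [e3]
      nlinarith [hsq]
  -- the key identity and final estimate
  have hD : ‖((N : ℂ)) ^ 2 - a * (starRingEnd ℂ b)‖ ≤ 2 * N ^ 2 := by
    calc ‖((N : ℂ)) ^ 2 - a * (starRingEnd ℂ b)‖
        ≤ ‖((N : ℂ)) ^ 2‖ + ‖a * (starRingEnd ℂ b)‖ := norm_sub_le _ _
      _ = N ^ 2 + ‖a‖ * ‖b‖ := by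
          rw [norm_pow, Complex.norm_real, Real.norm_eq_abs, _root_.abs_of_nonneg hN0, norm_mul,
            RCLike.norm_conj]
      _ ≤ 2 * N ^ 2 := by nlinarith [ha, hb, norm_nonneg a, norm_nonneg b, hN0]
  have hid : N ^ 2 * ‖a - b‖ ^ 2
      = ‖((N : ℂ)) ^ 2 - a * (starRingEnd ℂ b)‖ ^ 2 - (N ^ 2 - ‖a‖ ^ 2) * (N ^ 2 - ‖b‖ ^ 2) := by
    have n1 : ‖a - b‖ ^ 2 = Complex.normSq (a - b) := by
      rw [Complex.sq_norm]
    have n2 : ‖((N : ℂ)) ^ 2 - a * (starRingEnd ℂ b)‖ ^ 2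
        = Complex.normSq (((N : ℂ)) ^ 2 - a * (starRingEnd ℂ b)) := by
      rw [Complex.sq_norm]
    have n3 : ‖a‖ ^ 2 = Complex.normSq a := by rw [Complex.sq_norm]
    have n4 : ‖b‖ ^ 2 = Complex.normSq b := by rw [Complex.sq_norm]
    rw [n1, n2, n3, n4]
    simp only [Complex.normSq_apply, Complex.sub_re, Complex.sub_im, Complex.mul_re,
      Complex.mul_im, Complex.conj_re, Complex.conj_im, ← Complex.ofReal_pow,
      Complex.ofReal_re, Complex.ofReal_im]
    ring
  have hnw : ‖w‖ ^ 2 = ‖s‖ ^ 2 * ‖((N : ℂ)) ^ 2 - a * (starRingEnd ℂ b)‖ ^ 2 := by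
    rw [hw, norm_mul, mul_pow]
  have hdelta : 0 ≤ 1 - ‖s‖ ^ 2 := by nlinarith [norm_nonneg s]
  -- main chain
  have main : N ^ 2 * ‖a - b‖ ^ 2 ≤ 4 * N ^ 4 * (1 - ‖s‖ ^ 2) := by
    have h1 : N ^ 2 * ‖a - b‖ ^ 2
        ≤ ‖((N : ℂ)) ^ 2 - a * (starRingEnd ℂ b)‖ ^ 2 * (1 - ‖s‖ ^ 2) := by
      rw [hid]
      nlinarith [key, hnw]
    have h2 : ‖((N : ℂ)) ^ 2 - a * (starRingEnd ℂ b)‖ ^ 2 ≤ 4 * N ^ 4 := by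
      nlinarith [hD, norm_nonneg (((N : ℂ)) ^ 2 - a * (starRingEnd ℂ b))]
    nlinarith [h1, h2, hdelta]
  rcases eq_or_lt_of_le hN0 with hN0' | hN0'
  · -- N = 0 : a = b = 0
    have ha0 : ‖a‖ = 0 := le_antisymm (by rw [hN0']; exact ha) (norm_nonneg a)
    have hb0 : ‖b‖ = 0 := le_antisymm (by rw [hN0']; exact hb) (norm_nonneg b)
    have : a = 0 := norm_eq_zero.mp ha0
    have hbz : b = 0 := norm_eq_zero.mp hb0
    simp [this, hbz]
    positivity
  · have h3 : ‖a - b‖ ^ 2 ≤ (2 * N * Real.sqrt (1 - ‖s‖ ^ 2)) ^ 2 := by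
      have hq : Real.sqrt (1 - ‖s‖ ^ 2) ^ 2 = 1 - ‖s‖ ^ 2 := Real.sq_sqrt hdelta
      have hN2 : 0 < N ^ 2 := by positivity
      rw [mul_pow, mul_pow, hq]
      rw [← mul_le_mul_iff_right₀ hN2]
      nlinarith [main, hdelta, sq_nonneg N]
    calc ‖a - b‖ = Real.sqrt (‖a - b‖ ^ 2) := (Real.sqrt_sq (norm_nonneg _)).symm
      _ ≤ Real.sqrt ((2 * N * Real.sqrt (1 - ‖s‖ ^ 2)) ^ 2) := Real.sqrt_le_sqrt h3
      _ = 2 * N * Real.sqrt (1 - ‖s‖ ^ 2) := Real.sqrt_sq (by positivity)
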